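/- For every real N > 0, the affine polynomial ℓ₀(X) = √(nN) − (X₁ + ⋯ + Xₙ) satisfies the identity ℓ₀(X) = (1/(2√(nN)))·((√(nN) − Σⱼ Xⱼ)² + Σ_{j<j'} (Xⱼ − X_{j'})²) + (√n/(2√N))·(N − Σⱼ Xⱼ²) in ℝ[X₁,…,Xₙ]. -/

import Mathlib

open MvPolynomial

lemma pair_sum_aux {R : Type*} [CommRing R] (n : ℕ) (f : Fin n → R) :
    2 * ∑ p ∈ Finset.univ.filter (fun p : Fin n × Fin n => p.1 < p.2), (f p.1 - f p.2) ^ 2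
      = 2 * ((n : R) * ∑ j, (f j) ^ 2 - (∑ j, f j) ^ 2) := by
  have hswap : ∑ p ∈ Finset.univ.filter (fun p : Fin n × Fin n => p.2 < p.1),
      (f p.1 - f p.2) ^ 2
      = ∑ p ∈ Finset.univ.filter (fun p : Fin n × Fin n => p.1 < p.2), (f p.1 - f p.2) ^ 2 := by
    apply Finset.sum_nbij' (fun p => p.swap) (fun p => p.swap) <;>
      simp [sub_sq]; intros; ring
  have hsub : ∑ p ∈ Finset.univ.filter (fun p : Fin n × Fin n => ¬ p.1 < p.2),
      (f p.1 - f p.2) ^ 2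
      = ∑ p ∈ Finset.univ.filter (fun p : Fin n × Fin n => p.2 < p.1), (f p.1 - f p.2) ^ 2 := by
    symm
    apply Finset.sum_subset
    · intro p hp
      simp only [Finset.mem_filter, Finset.mem_univ, true_and] at hp ⊢
      exact not_lt.mpr hp.le
    · intro p hp hp2
      simp only [Finset.mem_filter, Finset.mem_univ, true_and, not_lt] at hp hp2
      have : p.1 = p.2 := le_antisymm hp2 hp
      rw [this]; ring
  have htot : ∑ p : Fin n × Fin n, (f p.1 - f p.2) ^ 2
      = 2 * ((n : R) * ∑ j, (f j) ^ 2 - (∑ j, f j) ^ 2) := by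
    rw [Fintype.sum_prod_type]
    simp only [sub_sq, Finset.sum_add_distrib, Finset.sum_sub_distrib, Finset.sum_const,
      Finset.card_univ, Fintype.card_fin, ← Finset.mul_sum, ← Finset.sum_mul, nsmul_eq_mul]
    ring
  calc 2 * ∑ p ∈ Finset.univ.filter (fun p : Fin n × Fin n => p.1 < p.2), (f p.1 - f p.2) ^ 2
      = ∑ p ∈ Finset.univ.filter (fun p : Fin n × Fin n => p.1 < p.2), (f p.1 - f p.2) ^ 2
        + ∑ p ∈ Finset.univ.filter (fun p : Fin n × Fin n => ¬ p.1 < p.2), (f p.1 - f p.2) ^ 2 := by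
        rw [hsub, hswap]; ring
    _ = ∑ p : Fin n × Fin n, (f p.1 - f p.2) ^ 2 := Finset.sum_filter_add_sum_filter_not _ _ _
    _ = _ := htot

lemma pair_sum {R : Type*} [CommRing R] [NoZeroDivisors R] [CharZero R] (n : ℕ) (f : Fin n → R) :
    ∑ p ∈ Finset.univ.filter (fun p : Fin n × Fin n => p.1 < p.2), (f p.1 - f p.2) ^ 2
      = (n : R) * ∑ j, (f j) ^ 2 - (∑ j, f j) ^ 2 :=
  mul_left_cancel₀ (two_ne_zero) (pair_sum_aux n f)

theorem stmt_1 (n : ℕ) (hn : 1 ≤ n) (N : ℝ) (hN : 0 < N) :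
    (C (Real.sqrt (n * N)) - ∑ j, X j : MvPolynomial (Fin n) ℝ) =
      C (1 / (2 * Real.sqrt (n * N))) *
        ((C (Real.sqrt (n * N)) - ∑ j, X j) ^ 2 +
          ∑ p ∈ Finset.univ.filter (fun p : Fin n × Fin n => p.1 < p.2),
            (X p.1 - X p.2) ^ 2) +
      C (Real.sqrt n / (2 * Real.sqrt N)) * (C N - ∑ j, X j ^ 2) := by
  set s := Real.sqrt (n * N) with hs
  have hn0 : (0:ℝ) < n := by exact_mod_cast hn
  have hspos : 0 < s := Real.sqrt_pos.mpr (by positivity)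
  have hs2 : s ^ 2 = n * N := Real.sq_sqrt (by positivity)
  have hsn : Real.sqrt n * Real.sqrt N = s := (Real.sqrt_mul (le_of_lt hn0) N).symm
  set d : ℝ := 1 / (2 * s) with hd
  set c : ℝ := Real.sqrt n / (2 * Real.sqrt N) with hc
  have hNpos : 0 < Real.sqrt N := Real.sqrt_pos.mpr hN
  have hnpos : 0 < Real.sqrt n := Real.sqrt_pos.mpr hn0
  have hNN : Real.sqrt N * Real.sqrt N = N := Real.mul_self_sqrt hN.le
  have hnn : Real.sqrt n * Real.sqrt n = (n:ℝ) := Real.mul_self_sqrt hn0.le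
  have e1 : d * s ^ 2 = s / 2 := by rw [hd]; field_simp
  have e2 : c * N = s / 2 := by
    rw [hc, ← hsn]; field_simp; linear_combination (-1 : ℝ) * hNN
  have h1 : d * s ^ 2 + c * N = s := by rw [e1, e2]; ring
  have h2 : d * (2 * s) = 1 := by
    rw [hd]; field_simp
  have h3 : d * n = c := by
    rw [hd, hc, ← hsn]; field_simp; linear_combination (-1 : ℝ) * hnn
  have q1 : (C d : MvPolynomial (Fin n) ℝ) * (C s) ^ 2 + C c * C N = C s := by
    rw [← C_pow, ← C_mul, ← C_mul, ← C_add, h1]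
  have q2 : (C d : MvPolynomial (Fin n) ℝ) * (2 * C s) = 1 := by
    rw [two_mul, ← C_add, ← C_mul, show s + s = 2 * s by ring, h2, C_1]
  have q3 : (C d : MvPolynomial (Fin n) ℝ) * (n : MvPolynomial (Fin n) ℝ) = C c := by
    rw [← map_natCast (C : ℝ →+* MvPolynomial (Fin n) ℝ) n, ← C_mul, h3]
  rw [pair_sum n (fun j => (X j : MvPolynomial (Fin n) ℝ))]
  linear_combination (-1 : MvPolynomial (Fin n) ℝ) * q1 + (∑ j, (X j : MvPolynomial (Fin n) ℝ)) * q2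
    - (∑ j, (X j : MvPolynomial (Fin n) ℝ) ^ 2) * q3
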